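/- Let X = |x⟩⟨y| be a rank-one operator on ℂ^m ⊗ ℂ^n with unit vectors x, y, and let 1 ≤ k ≤ min{m,n}. Then ‖X‖_{S(k)} = ‖X‖_op = 1 if and only if SR(x) ≤ k and SR(y) ≤ k. -/

import Mathlib

noncomputable section

/-- The elementary tensor `a ⊗ b` in `ℂ^m ⊗ ℂ^n ≅ ℂ^(m×n)`. -/
def tens {m n : ℕ} (a : EuclideanSpace ℂ (Fin m)) (b : EuclideanSpace ℂ (Fin n)) :
    EuclideanSpace ℂ (Fin m × Fin n) :=
  WithLp.toLp 2 (fun p : Fin m × Fin n => a p.1 * b p.2)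

/-- The Schmidt rank of `v ∈ ℂ^m ⊗ ℂ^n`. -/
def SR {m n : ℕ} (v : EuclideanSpace ℂ (Fin m × Fin n)) : ℕ :=
  sInf {k | ∃ (a : Fin k → EuclideanSpace ℂ (Fin m)) (b : Fin k → EuclideanSpace ℂ (Fin n)),
    v = ∑ i, tens (a i) (b i)}

/-- `‖X‖_{S(k)} := sup { |⟨w, X z⟩| : ‖w‖ = ‖z‖ = 1, SR(w) ≤ k, SR(z) ≤ k }`. -/
def SkNorm {m n : ℕ} (k : ℕ)
    (X : EuclideanSpace ℂ (Fin m × Fin n) →L[ℂ] EuclideanSpace ℂ (Fin m × Fin n)) : ℝ :=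
  sSup {t : ℝ | ∃ w z : EuclideanSpace ℂ (Fin m × Fin n),
    ‖w‖ = 1 ∧ ‖z‖ = 1 ∧ SR w ≤ k ∧ SR z ≤ k ∧ t = ‖(inner ℂ w (X z) : ℂ)‖}

private lemma sum_dite_fin {M : Type*} [AddCommMonoid M] {d k : ℕ} (h : d ≤ k) (f : Fin d → M) :
    (∑ i : Fin k, if hi : (i : ℕ) < d then f ⟨i, hi⟩ else 0) = ∑ i : Fin d, f i := by
  have h1 : ∀ N : ℕ, (∑ i : Fin N, if hi : (i : ℕ) < d then f ⟨i, hi⟩ else 0)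
      = ∑ i ∈ Finset.range N, if hi : i < d then f ⟨i, hi⟩ else 0 := fun N =>
    Fin.sum_univ_eq_sum_range (fun i => if hi : i < d then f ⟨i, hi⟩ else 0) N
  rw [h1]
  have h2 : ∑ i : Fin d, f i
      = ∑ i ∈ Finset.range d, if hi : i < d then f ⟨i, hi⟩ else 0 := by
    rw [← h1 d]
    exact Finset.sum_congr rfl fun i _ => by simp
  rw [h2]
  exact (Finset.sum_subset (Finset.range_subset_range.2 h)
    (fun i _ hi => dif_neg (by simpa using hi))).symm

private lemma sum_tens_apply {m n k : ℕ} (a : Fin k → EuclideanSpace ℂ (Fin m))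
    (b : Fin k → EuclideanSpace ℂ (Fin n)) (p : Fin m × Fin n) :
    (∑ i, tens (a i) (b i)) p = ∑ i, a i p.1 * b i p.2 :=
  by rw [WithLp.ofLp_sum, Finset.sum_apply]; rfl

private lemma tens_zero {m n : ℕ} :
    tens (0 : EuclideanSpace ℂ (Fin m)) (0 : EuclideanSpace ℂ (Fin n)) = 0 :=
  PiLp.ext fun _ => by simp [tens]

private lemma exists_decomp {m n : ℕ} (v : EuclideanSpace ℂ (Fin m × Fin n)) :
    ∃ (a : Fin (m * n) → EuclideanSpace ℂ (Fin m)) (b : Fin (m * n) → EuclideanSpace ℂ (Fin n)),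
      v = ∑ i, tens (a i) (b i) := by
  refine ⟨fun i => EuclideanSpace.single (finProdFinEquiv.symm i).1 (v (finProdFinEquiv.symm i)),
    fun i => EuclideanSpace.single (finProdFinEquiv.symm i).2 1, ?_⟩
  ext p
  rw [sum_tens_apply]
  rw [(Fintype.sum_equiv (finProdFinEquiv.symm : Fin (m * n) ≃ Fin m × Fin n) _
    (fun q : Fin m × Fin n => (EuclideanSpace.single q.1 (v q)) p.1
      * (EuclideanSpace.single q.2 (1:ℂ)) p.2) (fun i => rfl))]
  rw [Finset.sum_eq_single p]
  · simp [EuclideanSpace.single_apply]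
  · intro q _ hq
    by_cases h1 : p.1 = q.1
    · have h2 : p.2 ≠ q.2 := fun h2 => hq (Prod.ext h1 h2).symm
      simp [EuclideanSpace.single_apply, h2]
    · simp [EuclideanSpace.single_apply, h1]
  · simp

private lemma sr_le_iff {m n k : ℕ} (v : EuclideanSpace ℂ (Fin m × Fin n)) :
    SR v ≤ k ↔ ∃ (a : Fin k → EuclideanSpace ℂ (Fin m)) (b : Fin k → EuclideanSpace ℂ (Fin n)),
      v = ∑ i, tens (a i) (b i) := by
  constructor
  · intro h
    have hne : {j | ∃ (a : Fin j → EuclideanSpace ℂ (Fin m)) (b : Fin j → EuclideanSpace ℂ (Fin n)),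
        v = ∑ i, tens (a i) (b i)}.Nonempty := ⟨m * n, exists_decomp v⟩
    obtain ⟨a, b, hv⟩ := Nat.sInf_mem hne
    refine ⟨fun i => if hi : (i : ℕ) < SR v then a ⟨i, hi⟩ else 0,
      fun i => if hi : (i : ℕ) < SR v then b ⟨i, hi⟩ else 0, ?_⟩
    have hterm : ∀ i : Fin k,
        tens (if hi : (i : ℕ) < SR v then a ⟨i, hi⟩ else 0)
          (if hi : (i : ℕ) < SR v then b ⟨i, hi⟩ else 0)
        = if hi : (i : ℕ) < SR v then tens (a ⟨i, hi⟩) (b ⟨i, hi⟩) else 0 := by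
      intro i
      by_cases hi : (i : ℕ) < SR v
      · simp [hi]
      · simp [hi, tens_zero]
    rw [Finset.sum_congr rfl fun i _ => hterm i]
    exact hv.trans (sum_dite_fin h (fun i => tens (a i) (b i))).symm
  · rintro ⟨a, b, hv⟩
    exact Nat.sInf_le ⟨a, b, hv⟩

private lemma smul_sum_tens {m n j : ℕ} (c : ℂ) (a : Fin j → EuclideanSpace ℂ (Fin m))
    (b : Fin j → EuclideanSpace ℂ (Fin n)) :
    c • (∑ i, tens (a i) (b i)) = ∑ i, tens (c • a i) (b i) := by
  ext p
  have h1 : (c • (∑ i, tens (a i) (b i))) p = c * (∑ i, tens (a i) (b i)) p := rfl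
  rw [h1, sum_tens_apply, sum_tens_apply, Finset.mul_sum]
  refine Finset.sum_congr rfl fun i _ => ?_
  change c * (a i p.1 * b i p.2) = c * a i p.1 * b i p.2
  ring

private lemma sr_smul_le {m n : ℕ} (c : ℂ) (v : EuclideanSpace ℂ (Fin m × Fin n)) :
    SR (c • v) ≤ SR v := by
  have key : ∀ (j : ℕ), (∃ (a : Fin j → EuclideanSpace ℂ (Fin m))
      (b : Fin j → EuclideanSpace ℂ (Fin n)), v = ∑ i, tens (a i) (b i)) →
      (∃ (a : Fin j → EuclideanSpace ℂ (Fin m)) (b : Fin j → EuclideanSpace ℂ (Fin n)),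
        c • v = ∑ i, tens (a i) (b i)) := by
    rintro j ⟨a, b, rfl⟩
    exact ⟨fun i => c • a i, b, smul_sum_tens c a b⟩
  have hne : {j | ∃ (a : Fin j → EuclideanSpace ℂ (Fin m)) (b : Fin j → EuclideanSpace ℂ (Fin n)),
      v = ∑ i, tens (a i) (b i)}.Nonempty := ⟨m * n, exists_decomp v⟩
  exact Nat.sInf_le (key _ (Nat.sInf_mem hne))
private lemma inner_tens {m n : ℕ} (a a' : EuclideanSpace ℂ (Fin m))
    (b b' : EuclideanSpace ℂ (Fin n)) :
    (inner ℂ (tens a b) (tens a' b') : ℂ) = inner ℂ a a' * inner ℂ b b' := by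
  simp only [PiLp.inner_apply, RCLike.inner_apply, tens, PiLp.toLp_apply]
  rw [Fintype.sum_prod_type, Finset.sum_mul_sum]
  refine Finset.sum_congr rfl fun i _ => Finset.sum_congr rfl fun j _ => ?_
  simp only [map_mul]
  ring

private lemma normalize_decomp {m n k : ℕ} {R : ℝ} (hR : 0 ≤ R)
    (v : EuclideanSpace ℂ (Fin m × Fin n)) (hvR : ‖v‖ ≤ R)
    (a : Fin k → EuclideanSpace ℂ (Fin m)) (b : Fin k → EuclideanSpace ℂ (Fin n))
    (h : v = ∑ i, tens (a i) (b i)) :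
    ∃ (a' : Fin k → EuclideanSpace ℂ (Fin m)) (b' : Fin k → EuclideanSpace ℂ (Fin n)),
      (∀ i, ‖a' i‖ ≤ 1) ∧ (∀ i, ‖b' i‖ ≤ R) ∧ v = ∑ i, tens (a' i) (b' i) := by
  classical
  set S : Submodule ℂ (EuclideanSpace ℂ (Fin m)) := Submodule.span ℂ (Set.range a) with hS
  set d : ℕ := Module.finrank ℂ S with hdd
  have hd : d ≤ k := by
    classical
    have h1 := finrank_span_le_card (R := ℂ) (Set.range a)
    rw [Set.toFinset_card] at h1
    exact h1.trans ((Fintype.card_range_le a).trans (Fintype.card_fin k).le)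
  set ob : OrthonormalBasis (Fin d) ℂ S := stdOrthonormalBasis ℂ S with hob
  set e : Fin k → EuclideanSpace ℂ (Fin m) :=
    fun j => if hj : (j : ℕ) < d then (ob ⟨j, hj⟩ : EuclideanSpace ℂ (Fin m)) else 0 with he
  set c : Fin k → Fin k → ℂ := fun i j =>
    if hj : (j : ℕ) < d then
      (inner ℂ ((ob ⟨j, hj⟩ : S) : EuclideanSpace ℂ (Fin m)) (a i) : ℂ) else 0 with hc
  have key : ∀ i, a i = ∑ j : Fin k, c i j • e j := by
    intro i
    have hmem : a i ∈ S := Submodule.subset_span (Set.mem_range_self i)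
    have h1 : ∀ j : Fin k, c i j • e j
        = if hj : (j : ℕ) < d then
            (inner ℂ ((ob ⟨j, hj⟩ : S) : EuclideanSpace ℂ (Fin m)) (a i) : ℂ)
              • ((ob ⟨j, hj⟩ : S) : EuclideanSpace ℂ (Fin m)) else 0 := by
      intro j
      by_cases hj : (j : ℕ) < d <;> simp [hc, he, hj]
    rw [Finset.sum_congr rfl fun j _ => h1 j,
      sum_dite_fin hd (fun j : Fin d =>
        (inner ℂ ((ob j : S) : EuclideanSpace ℂ (Fin m)) (a i) : ℂ)
          • ((ob j : S) : EuclideanSpace ℂ (Fin m)))]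
    have h2 := congrArg (Subtype.val) (ob.sum_repr' (⟨a i, hmem⟩ : S))
    simp only [AddSubmonoidClass.coe_finset_sum, Submodule.coe_smul, Submodule.coe_inner] at h2
    exact h2.symm
  set b'' : Fin k → EuclideanSpace ℂ (Fin n) :=
    fun j => if (j : ℕ) < d then ∑ i, c i j • b i else 0 with hb''
  have he_norm : ∀ j, ‖e j‖ ≤ 1 := by
    intro j
    by_cases hj : (j : ℕ) < d
    · simp only [he, dif_pos hj]
      rw [show ‖((ob ⟨j, hj⟩ : S) : EuclideanSpace ℂ (Fin m))‖ = ‖(ob ⟨j, hj⟩ : S)‖ from rfl,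
        ob.orthonormal.1 ⟨j, hj⟩]
    · simp [he, hj]
  have hdecomp : v = ∑ j, tens (e j) (b'' j) := by
    ext p
    rw [h, sum_tens_apply, sum_tens_apply]
    have ha : ∀ i, a i p.1 = ∑ j, c i j * e j p.1 := by
      intro i
      rw [key i, WithLp.ofLp_sum, Finset.sum_apply]
      exact Finset.sum_congr rfl fun j _ => rfl
    calc ∑ i, a i p.1 * b i p.2 = ∑ i, ∑ j, c i j * e j p.1 * b i p.2 := by
          refine Finset.sum_congr rfl fun i _ => ?_
          rw [ha i, Finset.sum_mul]
      _ = ∑ j, ∑ i, c i j * e j p.1 * b i p.2 := Finset.sum_comm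
      _ = ∑ j, e j p.1 * b'' j p.2 := by
          refine Finset.sum_congr rfl fun j _ => ?_
          by_cases hj : (j : ℕ) < d
          · have : b'' j p.2 = ∑ i, c i j * b i p.2 := by
              simp only [hb'', if_pos hj]
              rw [WithLp.ofLp_sum, Finset.sum_apply]
              exact Finset.sum_congr rfl fun i _ => rfl
            rw [this, Finset.mul_sum]
            exact Finset.sum_congr rfl fun i _ => by ring
          · have hc0 : ∀ i, c i j = 0 := fun i => dif_neg hj
            simp [hb'', hj, hc0]
  have hinner_e : ∀ j l : Fin k, j ≠ l → (inner ℂ (e j) (e l) : ℂ) = 0 := by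
    intro j l hjl
    by_cases hj : (j : ℕ) < d
    · by_cases hl : (l : ℕ) < d
      · simp only [he, dif_pos hj, dif_pos hl]
        have hne : (⟨(j : ℕ), hj⟩ : Fin d) ≠ ⟨(l : ℕ), hl⟩ := by
          intro hcon
          have hval : (j : ℕ) = (l : ℕ) := by injection hcon
          exact hjl (Fin.ext hval)
        exact ob.orthonormal.2 hne
      · simp [he, hl]
    · simp [he, hj]
  have hsum_sq : ‖v‖ ^ 2 = ∑ j, ‖b'' j‖ ^ 2 := by
    have h1 : (inner ℂ v v : ℂ) = ∑ j, ∑ l, (inner ℂ (e l) (e j) : ℂ) * inner ℂ (b'' l) (b'' j) := by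
      rw [hdecomp, inner_sum]
      refine Finset.sum_congr rfl fun l _ => ?_
      rw [sum_inner]
      exact Finset.sum_congr rfl fun j _ => inner_tens _ _ _ _
    have h2 : (inner ℂ v v : ℂ) = ∑ j, ((‖b'' j‖ : ℂ)) ^ 2 := by
      rw [h1]
      refine Finset.sum_congr rfl fun j _ => ?_
      rw [Finset.sum_eq_single j]
      · by_cases hj : (j : ℕ) < d
        · have : (inner ℂ (e j) (e j) : ℂ) = 1 := by
            simp only [he, dif_pos hj]
            rw [@inner_self_eq_norm_sq_to_K ℂ]
            rw [show ‖((ob ⟨j, hj⟩ : S) : EuclideanSpace ℂ (Fin m))‖ = ‖(ob ⟨j, hj⟩ : S)‖ from rfl,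
              ob.orthonormal.1 ⟨j, hj⟩]
            norm_num
          rw [this, one_mul, @inner_self_eq_norm_sq_to_K ℂ]
          norm_cast
        · have hb0 : b'' j = 0 := by simp [hb'', hj]
          simp [hb0]
      · intro l _ hlj
        rw [hinner_e l j hlj, zero_mul]
      · simp
    have h3 : (inner ℂ v v : ℂ) = ((‖v‖ : ℂ)) ^ 2 := @inner_self_eq_norm_sq_to_K ℂ _ _ _ _ v
    rw [h3] at h2
    exact_mod_cast h2
  have hb_norm : ∀ j, ‖b'' j‖ ≤ R := by
    intro j
    have h1 : ‖b'' j‖ ^ 2 ≤ ∑ l, ‖b'' l‖ ^ 2 :=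
      Finset.single_le_sum (f := fun l => ‖b'' l‖ ^ 2) (fun _ _ => sq_nonneg _)
        (Finset.mem_univ j)
    have h2 : ‖v‖ ^ 2 ≤ R ^ 2 := pow_le_pow_left₀ (norm_nonneg v) hvR 2
    have h4 : ‖b'' j‖ ^ 2 ≤ R ^ 2 := (h1.trans (le_of_eq hsum_sq.symm)).trans h2
    calc ‖b'' j‖ = Real.sqrt (‖b'' j‖ ^ 2) := (Real.sqrt_sq (norm_nonneg _)).symm
      _ ≤ Real.sqrt (R ^ 2) := Real.sqrt_le_sqrt h4
      _ = R := Real.sqrt_sq hR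
  exact ⟨e, b'', he_norm, hb_norm, hdecomp⟩

private lemma continuous_sum_tens {m n k : ℕ} :
    Continuous (fun ab : (Fin k → EuclideanSpace ℂ (Fin m)) × (Fin k → EuclideanSpace ℂ (Fin n)) =>
      ∑ i, tens (ab.1 i) (ab.2 i)) := by
  apply continuous_finset_sum
  intro i _
  unfold tens
  apply (PiLp.continuous_toLp 2 _).comp
  apply continuous_pi
  intro p
  exact ((PiLp.continuous_apply 2 (fun _ : Fin m => ℂ) p.1).comp ((continuous_apply i).comp continuous_fst)).mul
    ((PiLp.continuous_apply 2 (fun _ : Fin n => ℂ) p.2).comp ((continuous_apply i).comp continuous_snd))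

private lemma isClosed_sr_le {m n k : ℕ} :
    IsClosed {v : EuclideanSpace ℂ (Fin m × Fin n) | SR v ≤ k} := by
  apply isClosed_of_closure_subset
  intro v hv
  set R : ℝ := ‖v‖ + 1 with hRdef
  have hR : 0 ≤ R := by positivity
  set Kset : Set ((Fin k → EuclideanSpace ℂ (Fin m)) × (Fin k → EuclideanSpace ℂ (Fin n))) :=
    (Set.pi Set.univ fun _ => Metric.closedBall (0 : EuclideanSpace ℂ (Fin m)) 1) ×ˢ
    (Set.pi Set.univ fun _ => Metric.closedBall (0 : EuclideanSpace ℂ (Fin n)) R) with hK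
  set f : (Fin k → EuclideanSpace ℂ (Fin m)) × (Fin k → EuclideanSpace ℂ (Fin n)) →
      EuclideanSpace ℂ (Fin m × Fin n) := fun ab => ∑ i, tens (ab.1 i) (ab.2 i) with hf
  have hKc : IsCompact Kset :=
    (isCompact_univ_pi fun _ => isCompact_closedBall _ _).prod
      (isCompact_univ_pi fun _ => isCompact_closedBall _ _)
  have hclosed : IsClosed (f '' Kset) := (hKc.image continuous_sum_tens).isClosed
  have hmem : v ∈ closure (f '' Kset) := by
    rw [Metric.mem_closure_iff]
    intro ε hε
    obtain ⟨u, huA, hud⟩ := Metric.mem_closure_iff.1 hv (min ε 1) (by positivity)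
    have hu_norm : ‖u‖ ≤ R := by
      have h1 : ‖u‖ - ‖v‖ ≤ ‖u - v‖ := norm_sub_norm_le u v
      have h2 : dist v u < 1 := lt_of_lt_of_le hud (min_le_right _ _)
      rw [dist_eq_norm] at h2
      rw [show ‖u - v‖ = ‖v - u‖ from norm_sub_rev u v] at h1
      simp only [hRdef]
      linarith
    obtain ⟨a, b, hu⟩ := (sr_le_iff u).1 huA
    obtain ⟨a', b', ha', hb', hu'⟩ := normalize_decomp hR u hu_norm a b hu
    refine ⟨f (a', b'), ⟨(a', b'), ?_, rfl⟩, ?_⟩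
    · constructor
      · intro i _
        simpa using ha' i
      · intro i _
        simpa using hb' i
    · have : f (a', b') = u := hu'.symm
      rw [this]
      exact lt_of_lt_of_le hud (min_le_left _ _)
  have : v ∈ f '' Kset := hclosed.closure_subset hmem
  obtain ⟨⟨a, b⟩, _, hfab⟩ := this
  exact (sr_le_iff v).2 ⟨a, b, hfab.symm⟩

private lemma sr_le_of_approx {m n k : ℕ} (x : EuclideanSpace ℂ (Fin m × Fin n)) (hx : ‖x‖ = 1)
    (H : ∀ ε : ℝ, 0 < ε → ∃ w : EuclideanSpace ℂ (Fin m × Fin n),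
      ‖w‖ = 1 ∧ SR w ≤ k ∧ 1 - ε < ‖(inner ℂ w x : ℂ)‖) : SR x ≤ k := by
  have hcl : x ∈ closure {v : EuclideanSpace ℂ (Fin m × Fin n) | SR v ≤ k} := by
    rw [Metric.mem_closure_iff]
    intro ε hε
    obtain ⟨w, hw1, hwk, hwx⟩ := H (min (ε ^ 2 / 4) (1 / 2)) (by positivity)
    set d : ℂ := inner ℂ w x with hd
    have hd1 : ‖d‖ ≤ 1 := by
      have := norm_inner_le_norm (𝕜 := ℂ) w x
      rw [hw1, hx] at this
      simpa using this
    have hdlb : 1 - ε ^ 2 / 4 ≤ 1 - min (ε ^ 2 / 4) (1 / 2) := by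
      have := min_le_left (ε ^ 2 / 4) (1 / 2)
      linarith
    have hdpos : 0 < ‖d‖ := by
      have h2 : 1 - min (ε ^ 2 / 4) (1 / 2) ≥ 1 / 2 := by
        have := min_le_right (ε ^ 2 / 4) (1 / 2)
        linarith
      linarith
    set c : ℂ := d / ((‖d‖ : ℝ) : ℂ) with hcdef
    have hcabs : ‖c‖ = 1 := by
      rw [hcdef, norm_div, Complex.norm_real, Real.norm_eq_abs, abs_of_pos hdpos, div_self (ne_of_gt hdpos)]
    set u : EuclideanSpace ℂ (Fin m × Fin n) := c • w with hu
    have hun : ‖u‖ = 1 := by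
      rw [hu, norm_smul, hw1, mul_one, hcabs]
    have hinner : (inner ℂ x u : ℂ) = ((‖d‖ : ℝ) : ℂ) := by
      have h5 : (inner ℂ x w : ℂ) = (starRingEnd ℂ) d := by
        rw [hd]
        exact (inner_conj_symm x w).symm
      rw [hu, inner_smul_right, h5, hcdef, div_mul_eq_mul_div, Complex.mul_conj,
        Complex.normSq_eq_norm_sq]
      rw [div_eq_iff (by exact_mod_cast hdpos.ne')]
      push_cast
      ring
    have hdist2 : ‖x - u‖ ^ 2 = 2 - 2 * ‖d‖ := by
      rw [@norm_sub_sq ℂ, hinner, hx, hun]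
      simp [Complex.ofReal_re]
      ring
    have hlt : ‖x - u‖ ^ 2 < ε ^ 2 := by
      have : 1 - ε ^ 2 / 4 < ‖d‖ := lt_of_le_of_lt hdlb hwx
      nlinarith [hε]
    refine ⟨u, le_trans (sr_smul_le c w) hwk, ?_⟩
    rw [dist_eq_norm]
    nlinarith [norm_nonneg (x - u), hε]
  exact isClosed_sr_le.closure_subset hcl

/-- For a rank-one operator `X = |x⟩⟨y|` with unit vectors `x, y`, one has
`‖X‖_{S(k)} = ‖X‖_op = 1` iff `SR(x) ≤ k` and `SR(y) ≤ k`. -/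
theorem stmt11 {m n k : ℕ} (hk1 : 1 ≤ k) (hk2 : k ≤ min m n)
    (x y : EuclideanSpace ℂ (Fin m × Fin n)) (hx : ‖x‖ = 1) (hy : ‖y‖ = 1) :
    (SkNorm k ((innerSL ℂ y).smulRight x) = 1 ∧ ‖(innerSL ℂ y).smulRight x‖ = 1) ↔
    (SR x ≤ k ∧ SR y ≤ k) := by
  have hm : 0 < m := by have := min_le_left m n; omega
  have hn : 0 < n := by have := min_le_right m n; omega
  set X := (innerSL ℂ y).smulRight x with hX
  have hXapp : ∀ w z : EuclideanSpace ℂ (Fin m × Fin n),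
      (inner ℂ w (X z) : ℂ) = inner ℂ y z * inner ℂ w x := by
    intro w z
    rw [hX]
    simp [ContinuousLinearMap.smulRight_apply, innerSL_apply_apply, inner_smul_right]
  have hXnorm : ‖X‖ = 1 := by
    rw [hX, ContinuousLinearMap.norm_smulRight_apply, innerSL_apply_norm, hx, hy, one_mul]
  set Sset : Set ℝ := {t | ∃ w z : EuclideanSpace ℂ (Fin m × Fin n),
    ‖w‖ = 1 ∧ ‖z‖ = 1 ∧ SR w ≤ k ∧ SR z ≤ k ∧ t = ‖(inner ℂ w (X z) : ℂ)‖} with hSset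
  have hSk : SkNorm k X = sSup Sset := rfl
  have hub : ∀ t ∈ Sset, t ≤ 1 := by
    rintro t ⟨w, z, hw, hz, -, -, rfl⟩
    rw [hXapp w z, norm_mul]
    have h1 : ‖(inner ℂ y z : ℂ)‖ ≤ 1 := by
      have := norm_inner_le_norm (𝕜 := ℂ) y z; rw [hy, hz] at this; simpa using this
    have h2 : ‖(inner ℂ w x : ℂ)‖ ≤ 1 := by
      have := norm_inner_le_norm (𝕜 := ℂ) w x; rw [hw, hx] at this; simpa using this
    nlinarith [norm_nonneg (inner ℂ y z : ℂ), norm_nonneg (inner ℂ w x : ℂ)]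
  have hw0 : ∃ w0 : EuclideanSpace ℂ (Fin m × Fin n), ‖w0‖ = 1 ∧ SR w0 ≤ k := by
    refine ⟨EuclideanSpace.single (⟨0, hm⟩, ⟨0, hn⟩) (1 : ℂ), ?_, ?_⟩
    · simp [EuclideanSpace.norm_single]
    · refine le_trans ?_ hk1
      refine (sr_le_iff _).2 ⟨fun _ => EuclideanSpace.single ⟨0, hm⟩ 1,
        fun _ => EuclideanSpace.single ⟨0, hn⟩ 1, ?_⟩
      ext p
      rw [sum_tens_apply, Fin.sum_univ_one]
      by_cases h1 : p.1 = (⟨0, hm⟩ : Fin m) <;> by_cases h2 : p.2 = (⟨0, hn⟩ : Fin n) <;>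
        simp [EuclideanSpace.single_apply, Prod.ext_iff, h1, h2]
  constructor
  · rintro ⟨hS, -⟩
    have happrox : ∀ ε : ℝ, 0 < ε → ∃ w z : EuclideanSpace ℂ (Fin m × Fin n),
        ‖w‖ = 1 ∧ ‖z‖ = 1 ∧ SR w ≤ k ∧ SR z ≤ k ∧
        1 - ε < ‖(inner ℂ w x : ℂ)‖ ∧ 1 - ε < ‖(inner ℂ y z : ℂ)‖ := by
      intro ε hε
      have hne : Sset.Nonempty := by
        obtain ⟨w0, hw01, hw0k⟩ := hw0
        exact ⟨_, w0, w0, hw01, hw01, hw0k, hw0k, rfl⟩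
      have hlt : 1 - ε < sSup Sset := by rw [← hSk, hS]; linarith
      obtain ⟨t, ht, htlt⟩ := exists_lt_of_lt_csSup hne hlt
      obtain ⟨w, z, hw, hz, hwk, hzk, rfl⟩ := ht
      rw [hXapp w z, norm_mul] at htlt
      have hA1 : ‖(inner ℂ y z : ℂ)‖ ≤ 1 := by
        have := norm_inner_le_norm (𝕜 := ℂ) y z; rw [hy, hz] at this; simpa using this
      have hB1 : ‖(inner ℂ w x : ℂ)‖ ≤ 1 := by
        have := norm_inner_le_norm (𝕜 := ℂ) w x; rw [hw, hx] at this; simpa using this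
      have hA0 : 0 ≤ ‖(inner ℂ y z : ℂ)‖ := norm_nonneg _
      have hB0 : 0 ≤ ‖(inner ℂ w x : ℂ)‖ := norm_nonneg _
      exact ⟨w, z, hw, hz, hwk, hzk, by nlinarith, by nlinarith⟩
    constructor
    · apply sr_le_of_approx x hx
      intro ε hε
      obtain ⟨w, z, hw, hz, hwk, hzk, h1, h2⟩ := happrox ε hε
      exact ⟨w, hw, hwk, h1⟩
    · apply sr_le_of_approx y hy
      intro ε hε
      obtain ⟨w, z, hw, hz, hwk, hzk, h1, h2⟩ := happrox ε hε
      refine ⟨z, hz, hzk, ?_⟩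
      have habs : ‖(inner ℂ z y : ℂ)‖ = ‖(inner ℂ y z : ℂ)‖ := by
        rw [show (inner ℂ z y : ℂ) = (starRingEnd ℂ) (inner ℂ y z : ℂ) from
          (inner_conj_symm z y).symm, Complex.norm_conj]
      rw [habs]
      exact h2
  · rintro ⟨hxk, hyk⟩
    refine ⟨?_, hXnorm⟩
    have hgreat : IsGreatest Sset 1 := by
      constructor
      · have h1 : (inner ℂ y y : ℂ) = 1 := by
          rw [@inner_self_eq_norm_sq_to_K ℂ, hy]; norm_num
        have h2 : (inner ℂ x x : ℂ) = 1 := by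
          rw [@inner_self_eq_norm_sq_to_K ℂ, hx]; norm_num
        refine ⟨x, y, hx, hy, hxk, hyk, ?_⟩
        rw [hXapp x y, h1, h2]
        simp
      · exact fun t ht => hub t ht
    rw [hSk]
    exact hgreat.csSup_eq
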